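/- Let V be a finite-dimensional vector space over a field of characteristic zero, N : V → V nilpotent, k ∈ ℤ, and W_• the weight filtration of N centered at k. For ℓ ≥ 0 define the primitive part P_{k+ℓ} := ker(N^{ℓ+1} : Gr^W_{k+ℓ} → Gr^W_{k−ℓ−2}). Then there is a Lefschetz-type decomposition: for every m, Gr^W_m = ⊕_{ℓ≥0} ⊕_{r=0}^{ℓ, k+ℓ−2r=m} N^r(P_{k+ℓ}), where N^r denotes the map Gr^W_{k+ℓ} → Gr^W_{k+ℓ−2r} induced by N^r; i.e. Gr^W V = ⊕_{ℓ≥0} ⊕_{r=0}^{ℓ} N^r P_{k+ℓ}. -/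

import Mathlib

/-- A weight filtration of a nilpotent endomorphism `N` centered at `k`: an increasing,
exhaustive and separated filtration `W` with `N(W_j) ⊆ W_{j−2}` such that for every `j ≥ 0`
the map induced by `N^j` from `Gr^W_{k+j}` to `Gr^W_{k−j}` is an isomorphism (the last two
clauses express injectivity and surjectivity of this induced map at the submodule level). -/
structure IsWeightFiltration {F V : Type*} [Field F] [AddCommGroup V] [Module F V]
    (N : V →ₗ[F] V) (k : ℤ) (W : ℤ → Submodule F V) : Prop where
  mono : Monotone W
  eventually_bot : ∃ a : ℤ, ∀ j ≤ a, W j = ⊥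
  eventually_top : ∃ b : ℤ, ∀ j, b ≤ j → W j = ⊤
  map_le : ∀ j : ℤ, (W j).map N ≤ W (j - 2)
  induced_inj : ∀ j : ℕ, ∀ x ∈ W (k + j), (N ^ j) x ∈ W (k - j - 1) → x ∈ W (k + j - 1)
  induced_surj : ∀ j : ℕ, W (k - j) ≤ W (k - j - 1) ⊔ (W (k + j)).map (N ^ j)

variable {F V : Type*} [Field F] [AddCommGroup V] [Module F V]

/-- The graded piece `Gr^W_m = W_m / W_{m−1}`. -/
abbrev Gr (W : ℤ → Submodule F V) (m : ℤ) : Type _ :=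
  W m ⧸ (W (m - 1)).comap (W m).subtype

lemma pow_map_mem {N : V →ₗ[F] V} {W : ℤ → Submodule F V}
    (hmap : ∀ j : ℤ, (W j).map N ≤ W (j - 2)) (j : ℕ) (m : ℤ)
    {x : V} (hx : x ∈ W m) : (N ^ j) x ∈ W (m - 2 * j) := by
  induction j with
  | zero => simpa using hx
  | succ n ih =>
      have h1 : N ((N ^ n) x) ∈ W (m - 2 * n - 2) :=
        hmap (m - 2 * n) ⟨(N ^ n) x, ih, rfl⟩
      have h2 : (N ^ (n + 1)) x = N ((N ^ n) x) := by
        rw [pow_succ']; rfl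
      rw [h2]
      convert h1 using 2
      push_cast; ring

/-- The map `Gr^W_m → Gr^W_{m'}` induced by `N^j`, defined whenever `m − 2j ≤ m'`. -/
noncomputable def grMap (N : V →ₗ[F] V) (W : ℤ → Submodule F V) (hmono : Monotone W)
    (hmap : ∀ j : ℤ, (W j).map N ≤ W (j - 2)) (j : ℕ) (m m' : ℤ) (h : m - 2 * j ≤ m') :
    Gr W m →ₗ[F] Gr W m' :=
  Submodule.mapQ _ _
    ((N ^ j).restrict (p := W m) (q := W m') fun x hx => hmono h (pow_map_mem hmap j m hx))
    (fun x hx => by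
      have : (N ^ j) (x : V) ∈ W (m - 1 - 2 * j) := pow_map_mem hmap j (m - 1) hx
      exact hmono (by omega) this)

/-- The primitive part `P_{k+ℓ} = ker (N^{ℓ+1} : Gr^W_{k+ℓ} → Gr^W_{k−ℓ−2})`. -/
noncomputable def prim (N : V →ₗ[F] V) (W : ℤ → Submodule F V) (k : ℤ) (hmono : Monotone W)
    (hmap : ∀ j : ℤ, (W j).map N ≤ W (j - 2)) (ℓ : ℕ) : Submodule F (Gr W (k + ℓ)) :=
  LinearMap.ker (grMap N W hmono hmap (ℓ + 1) (k + ℓ) (k - ℓ - 2) (by push_cast; omega))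

section Helpers

variable (N : V →ₗ[F] V) (W : ℤ → Submodule F V)
  (hmono : Monotone W) (hmap : ∀ j : ℤ, (W j).map N ≤ W (j - 2))

lemma grMap_grMap (j₁ j₂ j₃ : ℕ) (hj : j₃ = j₁ + j₂) (m₁ m₂ m₃ : ℤ)
    (h₁ : m₁ - 2 * j₁ ≤ m₂) (h₂ : m₂ - 2 * j₂ ≤ m₃) (h₃ : m₁ - 2 * j₃ ≤ m₃)
    (x : Gr W m₁) :
    grMap N W hmono hmap j₂ m₂ m₃ h₂ (grMap N W hmono hmap j₁ m₁ m₂ h₁ x)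
      = grMap N W hmono hmap j₃ m₁ m₃ h₃ x := by
  subst hj
  obtain ⟨⟨v, hv⟩, rfl⟩ := Submodule.Quotient.mk_surjective _ x
  simp only [grMap, Submodule.mapQ_apply]
  refine congrArg _ (Subtype.ext ?_)
  simp only [LinearMap.restrict_apply]
  rw [add_comm j₁ j₂, pow_add]
  rfl

lemma grMap_comp (j₁ j₂ j₃ : ℕ) (hj : j₃ = j₁ + j₂) (m₁ m₂ m₃ : ℤ)
    (h₁ : m₁ - 2 * j₁ ≤ m₂) (h₂ : m₂ - 2 * j₂ ≤ m₃) (h₃ : m₁ - 2 * j₃ ≤ m₃) :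
    (grMap N W hmono hmap j₂ m₂ m₃ h₂).comp (grMap N W hmono hmap j₁ m₁ m₂ h₁)
      = grMap N W hmono hmap j₃ m₁ m₃ h₃ :=
  LinearMap.ext fun x => grMap_grMap N W hmono hmap j₁ j₂ j₃ hj m₁ m₂ m₃ h₁ h₂ h₃ x

lemma grMap_zero_bijective (m m' : ℤ) (he : m = m') (h : m - 2 * (0:ℕ) ≤ m') :
    Function.Bijective (grMap N W hmono hmap 0 m m' h) := by
  subst he
  have hid : ∀ x, grMap N W hmono hmap 0 m m h x = x := by
    intro x
    obtain ⟨⟨v, hv⟩, rfl⟩ := Submodule.Quotient.mk_surjective _ x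
    simp only [grMap, Submodule.mapQ_apply]
    refine congrArg _ (Subtype.ext ?_)
    simp [LinearMap.restrict_apply]
  exact ⟨fun a b hab => by rwa [hid, hid] at hab, fun y => ⟨y, hid y⟩⟩

end Helpers

section Lefschetz

variable {N : V →ₗ[F] V} {W : ℤ → Submodule F V} {k : ℤ}

lemma lefschetz_inj (hW : IsWeightFiltration N k W) (j : ℕ) (m m' : ℤ)
    (hm : m = k + j) (hm' : m' = k - j) (h : m - 2 * j ≤ m') :
    Function.Injective (grMap N W hW.mono hW.map_le j m m' h) := by
  subst hm hm'
  rw [← LinearMap.ker_eq_bot]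
  rw [eq_bot_iff]
  intro x hx
  obtain ⟨⟨v, hv⟩, rfl⟩ := Submodule.Quotient.mk_surjective _ x
  rw [LinearMap.mem_ker, grMap, Submodule.mapQ_apply, Submodule.Quotient.mk_eq_zero] at hx
  have hx' : (N ^ j) v ∈ W (k - j - 1) := hx
  have := hW.induced_inj j v hv hx'
  rw [Submodule.mem_bot, Submodule.Quotient.mk_eq_zero]
  exact this

lemma lefschetz_surj (hW : IsWeightFiltration N k W) (j : ℕ) (m m' : ℤ)
    (hm : m = k + j) (hm' : m' = k - j) (h : m - 2 * j ≤ m') :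
    Function.Surjective (grMap N W hW.mono hW.map_le j m m' h) := by
  subst hm hm'
  intro y
  obtain ⟨⟨v, hv⟩, rfl⟩ := Submodule.Quotient.mk_surjective _ y
  have := hW.induced_surj j hv
  rw [Submodule.mem_sup] at this
  obtain ⟨w, hw, z, hz, hvz⟩ := this
  obtain ⟨u, hu, huz⟩ := hz
  refine ⟨Submodule.Quotient.mk ⟨u, hu⟩, ?_⟩
  rw [grMap, Submodule.mapQ_apply]
  rw [Submodule.Quotient.eq]
  have hval : (N ^ j) u - v = -w := by rw [← hvz, ← huz]; abel
  show (N ^ j) u - v ∈ W (k - (j:ℤ) - 1)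
  rw [hval]
  exact (W _).neg_mem hw

lemma grMap_one_inj (hW : IsWeightFiltration N k W) (m m' : ℤ)
    (h2 : m' = m - 2) (hk : k + 1 ≤ m) (h : m - 2 * (1:ℕ) ≤ m') :
    Function.Injective (grMap N W hW.mono hW.map_le 1 m m' h) := by
  obtain ⟨j, hj⟩ : ∃ j : ℕ, m = k + 1 + j := ⟨(m - k - 1).toNat, by omega⟩
  intro x y hxy
  have hc := congrArg (grMap N W hW.mono hW.map_le j m' (k - (1 + j : ℕ)) (by push_cast; omega)) hxy
  rw [grMap_grMap N W hW.mono hW.map_le 1 j (1 + j) rfl m m' (k - (1+j:ℕ)) h _ (by push_cast; omega),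
      grMap_grMap N W hW.mono hW.map_le 1 j (1 + j) rfl m m' (k - (1+j:ℕ)) h _ (by push_cast; omega)] at hc
  exact lefschetz_inj hW (1 + j) m (k - (1+j:ℕ)) (by push_cast; omega) rfl _ hc

end Lefschetz

section Pieces

variable (N : V →ₗ[F] V) (W : ℤ → Submodule F V)
  (hmono : Monotone W) (hmap : ∀ j : ℤ, (W j).map N ≤ W (j - 2))

noncomputable def piece (k m : ℤ) (ℓ r : ℕ) (h : (k : ℤ) + ℓ - 2 * r ≤ m) :
    Submodule F (Gr W m) :=
  Submodule.map (grMap N W hmono hmap r (k + ℓ) m h) (prim N W k hmono hmap ℓ)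

noncomputable def EE (k m : ℤ) (r : ℕ) : Submodule F (Gr W m) :=
  if h : (k : ℤ) - m ≤ r then
    piece N W hmono hmap k m (m - k + 2 * r).toNat r (by omega)
  else ⊥

lemma piece_eq_EE (k m : ℤ) (ℓ r : ℕ) (h1 : (k : ℤ) + ℓ - 2 * r = m) (h2 : r ≤ ℓ)
    (h : (k : ℤ) + ℓ - 2 * r ≤ m) :
    piece N W hmono hmap k m ℓ r h = EE N W hmono hmap k m r := by
  have hc : (k : ℤ) - m ≤ r := by omega
  rw [EE, dif_pos hc]
  have hℓ : ℓ = (m - k + 2 * r).toNat := by omega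
  subst hℓ
  rfl

lemma piece_map (k : ℤ) (ℓ r₁ r₂ : ℕ) (m₂ m₃ : ℤ)
    (h₁ : (k : ℤ) + ℓ - 2 * r₁ ≤ m₂) (h₂ : m₂ - 2 * r₂ ≤ m₃)
    (h₃ : (k : ℤ) + ℓ - 2 * (r₁ + r₂ : ℕ) ≤ m₃) :
    piece N W hmono hmap k m₃ ℓ (r₁ + r₂) h₃
      = Submodule.map (grMap N W hmono hmap r₂ m₂ m₃ h₂) (piece N W hmono hmap k m₂ ℓ r₁ h₁) := by
  rw [piece, piece, ← Submodule.map_comp,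
    grMap_comp N W hmono hmap r₁ r₂ (r₁ + r₂) rfl (k + ℓ) m₂ m₃ h₁ h₂ h₃]

lemma EE_bot (k m : ℤ) (r : ℕ) (hr : ¬ ((k : ℤ) - m ≤ r)) :
    EE N W hmono hmap k m r = ⊥ := dif_neg hr

end Pieces

section Lattice

lemma iSup_nat_split {α : Type*} [CompleteLattice α] (f : ℕ → α) :
    (⨆ r, f r) = f 0 ⊔ ⨆ r, f (r + 1) := by
  refine le_antisymm (iSup_le fun r => ?_) (sup_le (le_iSup f 0) (iSup_le fun r => le_iSup f (r + 1)))
  cases r with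
  | zero => exact le_sup_left
  | succ t => exact le_sup_of_le_right (le_iSup (fun r => f (r + 1)) t)

variable {M M' : Type*} [AddCommGroup M] [Module F M] [AddCommGroup M'] [Module F M']

lemma map_disjoint {f : M →ₗ[F] M'} (hf : Function.Injective f) {a b : Submodule F M}
    (h : Disjoint a b) : Disjoint (Submodule.map f a) (Submodule.map f b) := by
  rw [Submodule.disjoint_def]
  rintro x ⟨u, hu, rfl⟩ ⟨v, hv, hvu⟩
  have : v = u := hf hvu
  subst this
  have : v = 0 := Submodule.disjoint_def.1 h v hu hv
  rw [this, map_zero]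

lemma indep_map {ι : Sort*} {f : M →ₗ[F] M'} (hf : Function.Injective f)
    {g : ι → Submodule F M} (hg : iSupIndep g) :
    iSupIndep fun i => Submodule.map f (g i) := by
  intro i
  refine (map_disjoint hf (hg i)).mono_right ?_
  refine iSup₂_le fun j hj => ?_
  exact Submodule.map_mono (le_iSup₂ (f := fun j (_ : j ≠ i) => g j) j hj) |>.trans
    (Submodule.map_mono le_rfl)

lemma indep_cons {p q : Submodule F M} {g : ℕ → Submodule F M}
    (hg : ∀ r, g r ≤ q) (hpq : Disjoint p q) (hind : iSupIndep g)
    {E : ℕ → Submodule F M} (hE0 : E 0 = p) (hES : ∀ r, E (r + 1) = g r) :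
    iSupIndep E := by
  intro r
  cases r with
  | zero =>
      rw [hE0]
      refine hpq.mono_right (iSup₂_le ?_)
      rintro (_ | t) hj
      · exact absurd rfl hj
      · rw [hES t]; exact hg t
  | succ t =>
      rw [Submodule.disjoint_def]
      intro x hx hx'
      rw [hES t] at hx
      have hsup_le : (⨆ (j) (_ : j ≠ t + 1), E j) ≤ p ⊔ ⨆ (j) (_ : j ≠ t), g j := by
        refine iSup₂_le ?_
        rintro (_ | u) hj
        · rw [hE0]; exact le_sup_left
        · rw [hES u]
          exact le_sup_of_le_right (le_iSup₂ (f := fun j (_ : j ≠ t) => g j) u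
            (fun h => hj (by rw [h])))
      obtain ⟨a, ha, b, hb, hab⟩ := Submodule.mem_sup.1 (hsup_le hx')
      have hbq : b ∈ q := (iSup₂_le fun j _ => hg j : _ ≤ q) hb
      have haq : a ∈ q := by
        have : a = x - b := by rw [← hab]; abel
        rw [this]; exact q.sub_mem (hg t hx) hbq
      have ha0 : a = 0 := Submodule.disjoint_def.1 hpq a ha haq
      have hxb : x = b := by rw [← hab, ha0, zero_add]
      rw [hxb] at hx ⊢
      exact Submodule.disjoint_def.1 (hind t) b hx hb

end Lattice

section Main

variable {N : V →ₗ[F] V} {W : ℤ → Submodule F V} {k : ℤ}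

lemma EE_internal_of_subsingleton (hmono : Monotone W) (hmap : ∀ j : ℤ, (W j).map N ≤ W (j - 2))
    (k m : ℤ) (htop : W (m - 1) = ⊤) :
    iSupIndep (EE N W hmono hmap k m) ∧ (⨆ r, EE N W hmono hmap k m r) = ⊤ := by
  have hs : Subsingleton (Gr W m) := by
    rw [Submodule.Quotient.subsingleton_iff, htop]
    exact Submodule.comap_top _
  have hall : ∀ p : Submodule F (Gr W m), p = ⊥ := by
    intro p; ext x
    have : x = 0 := Subsingleton.elim x 0
    simp [this]
  exact ⟨fun r => by rw [hall (EE N W hmono hmap k m r)]; exact disjoint_bot_left,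
    (hall _).trans (hall ⊤).symm⟩

lemma prim_compl (hW : IsWeightFiltration N k W) (m : ℤ) (hkm : k ≤ m) (ℓ0 : ℕ)
    (hℓ0 : (k : ℤ) + ℓ0 = m)
    (h1 : (m + 2) - 2 * (1:ℕ) ≤ m) (hp : (k : ℤ) + ℓ0 - 2 * (0:ℕ) ≤ m) :
    Disjoint (piece N W hW.mono hW.map_le k m ℓ0 0 hp)
        (LinearMap.range (grMap N W hW.mono hW.map_le 1 (m + 2) m h1))
    ∧ piece N W hW.mono hW.map_le k m ℓ0 0 hp
        ⊔ LinearMap.range (grMap N W hW.mono hW.map_le 1 (m + 2) m h1) = ⊤ := by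
  set n₁ := grMap N W hW.mono hW.map_le 1 (m + 2) m h1 with hn₁
  have htest : ((m : ℤ)) - 2 * ((ℓ0 + 1 : ℕ) : ℤ) ≤ k - ℓ0 - 2 := by push_cast; omega
  set gtest := grMap N W hW.mono hW.map_le (ℓ0 + 1) m (k - ℓ0 - 2) htest with hgtest
  have hbigle : ((m : ℤ) + 2) - 2 * ((ℓ0 + 2 : ℕ) : ℤ) ≤ k - ℓ0 - 2 := by push_cast; omega
  set gbig := grMap N W hW.mono hW.map_le (ℓ0 + 2) (m + 2) (k - ℓ0 - 2) hbigle with hgbig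
  have hbig_inj : Function.Injective gbig :=
    lefschetz_inj hW (ℓ0 + 2) (m + 2) (k - (ℓ0:ℤ) - 2) (by push_cast; omega) (by push_cast; omega) _
  have hbig_surj : Function.Surjective gbig :=
    lefschetz_surj hW (ℓ0 + 2) (m + 2) (k - (ℓ0:ℤ) - 2) (by push_cast; omega) (by push_cast; omega) _
  have hcomp1 : ∀ y, gtest (n₁ y) = gbig y := fun y =>
    grMap_grMap N W hW.mono hW.map_le 1 (ℓ0 + 1) (ℓ0 + 2) (by omega) (m + 2) m (k - ℓ0 - 2) h1 htest hbigle y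
  have hg0 := grMap_zero_bijective N W hW.mono hW.map_le (k + ℓ0) m (by omega) hp
  have hPm_mem : ∀ x, x ∈ piece N W hW.mono hW.map_le k m ℓ0 0 hp ↔ gtest x = 0 := by
    intro x
    constructor
    · rintro ⟨p, hp', rfl⟩
      rw [grMap_grMap N W hW.mono hW.map_le 0 (ℓ0 + 1) (ℓ0 + 1) (by omega) (k + ℓ0) m
        (k - ℓ0 - 2) hp htest (by push_cast; omega)]
      exact LinearMap.mem_ker.mp hp'
    · intro hx
      obtain ⟨p, rfl⟩ := hg0.2 x
      refine ⟨p, LinearMap.mem_ker.mpr ?_, rfl⟩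
      rw [← grMap_grMap N W hW.mono hW.map_le 0 (ℓ0 + 1) (ℓ0 + 1) (by omega) (k + ℓ0) m
        (k - ℓ0 - 2) hp htest (by push_cast; omega)]
      exact hx
  constructor
  · rw [Submodule.disjoint_def]
    rintro x hx ⟨y, rfl⟩
    have h0 : gbig y = 0 := by rw [← hcomp1]; exact (hPm_mem _).1 hx
    have : y = 0 := hbig_inj (by rw [h0, map_zero])
    rw [this, map_zero]
  · rw [eq_top_iff]
    intro x _
    obtain ⟨y, hy⟩ := hbig_surj (gtest x)
    have hx' : x - n₁ y ∈ piece N W hW.mono hW.map_le k m ℓ0 0 hp := by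
      rw [hPm_mem, map_sub, hcomp1, hy, sub_self]
    exact Submodule.mem_sup.2 ⟨x - n₁ y, hx', n₁ y, ⟨y, rfl⟩, by abel⟩

lemma main_ge (hW : IsWeightFiltration N k W) (b : ℤ)
    (hb : ∀ j, b ≤ j → W j = ⊤) :
    ∀ d : ℕ, ∀ m : ℤ, k ≤ m → b + 1 ≤ m + d →
      iSupIndep (EE N W hW.mono hW.map_le k m)
      ∧ (⨆ r, EE N W hW.mono hW.map_le k m r) = ⊤ := by
  intro d
  induction d with
  | zero =>
      intro m _ hbm
      exact EE_internal_of_subsingleton hW.mono hW.map_le k m (hb (m - 1) (by push_cast at hbm; omega))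
  | succ d ih =>
      intro m hkm hbm
      by_cases hbig : b + 1 ≤ m
      · exact EE_internal_of_subsingleton hW.mono hW.map_le k m (hb (m - 1) (by omega))
      · obtain ⟨ih_indep, ih_sup⟩ := ih (m + 2) (by omega) (by push_cast at hbm ⊢; omega)
        have h1 : ((m : ℤ) + 2) - 2 * ((1:ℕ) : ℤ) ≤ m := by push_cast; omega
        set n₁ := grMap N W hW.mono hW.map_le 1 (m + 2) m h1 with hn₁
        have hn₁inj : Function.Injective n₁ :=
          grMap_one_inj hW (m + 2) m (by omega) (by omega) h1
        set ℓ0 : ℕ := (m - k).toNat with hℓ0def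
        have hℓ0 : (k : ℤ) + ℓ0 = m := by rw [hℓ0def]; omega
        have hp : (k : ℤ) + ℓ0 - 2 * ((0:ℕ) : ℤ) ≤ m := by push_cast; omega
        obtain ⟨hdisj, hsup_top⟩ := prim_compl hW m hkm ℓ0 hℓ0 h1 hp
        have hE0 : EE N W hW.mono hW.map_le k m 0 = piece N W hW.mono hW.map_le k m ℓ0 0 hp :=
          (piece_eq_EE N W hW.mono hW.map_le k m ℓ0 0 (by push_cast; omega) (Nat.zero_le _) hp).symm
        have hES : ∀ r : ℕ, EE N W hW.mono hW.map_le k m (r + 1)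
            = Submodule.map n₁ (EE N W hW.mono hW.map_le k (m + 2) r) := by
          intro r
          by_cases hr : (k : ℤ) - (m + 2) ≤ r
          · set ℓ : ℕ := (m + 2 - k + 2 * r).toNat with hℓdef
            have hℓ : (k : ℤ) + ℓ - 2 * r = m + 2 := by rw [hℓdef]; push_cast; omega
            have hrℓ : r ≤ ℓ := by rw [hℓdef]; omega
            have hℓ1 : (k : ℤ) + ℓ - 2 * ((r + 1 : ℕ) : ℤ) = m := by push_cast; push_cast at hℓ; omega
            have hrℓ1 : r + 1 ≤ ℓ := by rw [hℓdef]; omega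
            rw [← piece_eq_EE N W hW.mono hW.map_le k (m + 2) ℓ r hℓ hrℓ (le_of_eq hℓ),
                ← piece_eq_EE N W hW.mono hW.map_le k m ℓ (r + 1) hℓ1 hrℓ1 (le_of_eq hℓ1),
                piece_map N W hW.mono hW.map_le k ℓ r 1 (m + 2) m (le_of_eq hℓ) h1 (le_of_eq hℓ1)]
          · rw [EE_bot N W hW.mono hW.map_le k (m + 2) r hr,
              EE_bot N W hW.mono hW.map_le k m (r + 1) (by push_cast; push_cast at hr; omega),
              Submodule.map_bot]
        constructor
        · refine indep_cons (q := LinearMap.range n₁) (fun r => ?_) hdisj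
            (indep_map hn₁inj ih_indep) hE0 hES
          rintro x ⟨y, _, rfl⟩; exact ⟨y, rfl⟩
        · rw [iSup_nat_split, hE0]
          have : (⨆ r, EE N W hW.mono hW.map_le k m (r + 1))
              = Submodule.map n₁ ⊤ := by
            rw [← ih_sup, Submodule.map_iSup]
            exact iSup_congr hES
          rw [this, Submodule.map_top, hsup_top]

end Main

section Main2

variable {N : V →ₗ[F] V} {W : ℤ → Submodule F V} {k : ℤ}

lemma main_lt (hW : IsWeightFiltration N k W) (b : ℤ)
    (hb : ∀ j, b ≤ j → W j = ⊤) (m : ℤ) (hm : m < k) :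
    iSupIndep (EE N W hW.mono hW.map_le k m)
    ∧ (⨆ r, EE N W hW.mono hW.map_le k m r) = ⊤ := by
  set j : ℕ := (k - m).toNat with hjdef
  have hj : (k : ℤ) - j = m := by rw [hjdef]; omega
  obtain ⟨A1, A2⟩ := main_ge hW b hb (b + 1 - (k + j)).toNat (k + (j:ℤ)) (by omega) (by omega)
  have hf : (k + (j:ℤ)) - 2 * (j:ℤ) ≤ m := by omega
  set f := grMap N W hW.mono hW.map_le j (k + (j:ℤ)) m hf with hfdef
  have hfinj : Function.Injective f := lefschetz_inj hW j (k + (j:ℤ)) m rfl (by omega) hf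
  have hfsurj : Function.Surjective f := lefschetz_surj hW j (k + (j:ℤ)) m rfl (by omega) hf
  have hEr : ∀ i : ℕ, EE N W hW.mono hW.map_le k m (i + j)
      = Submodule.map f (EE N W hW.mono hW.map_le k (k + (j:ℤ)) i) := by
    intro i
    have h1 : (k : ℤ) + ((2 * i + j : ℕ) : ℤ) - 2 * ((i + j : ℕ) : ℤ) = m := by push_cast; omega
    have h1' : (k : ℤ) + ((2 * i + j : ℕ) : ℤ) - 2 * (i : ℤ) = k + (j:ℤ) := by push_cast; omega
    rw [← piece_eq_EE N W hW.mono hW.map_le k m (2 * i + j) (i + j) h1 (by omega) (le_of_eq h1),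
        ← piece_eq_EE N W hW.mono hW.map_le k (k + (j:ℤ)) (2 * i + j) i h1' (by omega) (le_of_eq h1'),
        piece_map N W hW.mono hW.map_le k (2 * i + j) i j (k + (j:ℤ)) m (le_of_eq h1') hf (le_of_eq h1)]
  have hEbot : ∀ r : ℕ, r < j → EE N W hW.mono hW.map_le k m r = ⊥ := by
    intro r hr
    exact EE_bot N W hW.mono hW.map_le k m r (by omega)
  constructor
  · intro r
    by_cases hr : r < j
    · rw [hEbot r hr]; exact disjoint_bot_left
    · obtain ⟨i, rfl⟩ : ∃ i, r = i + j := ⟨r - j, by omega⟩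
      rw [hEr i]
      refine (map_disjoint hfinj (A1 i)).mono_right (iSup₂_le ?_)
      intro r' hr'
      by_cases h' : r' < j
      · rw [hEbot r' h']; exact bot_le
      · obtain ⟨i', rfl⟩ : ∃ i', r' = i' + j := ⟨r' - j, by omega⟩
        rw [hEr i']
        exact Submodule.map_mono
          (le_iSup₂ (f := fun i' (_ : i' ≠ i) => EE N W hW.mono hW.map_le k (k + (j:ℤ)) i') i'
            (fun h => hr' (by rw [h])))
  · have hshift : (⨆ r, EE N W hW.mono hW.map_le k m r)
        = ⨆ i, EE N W hW.mono hW.map_le k m (i + j) := by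
      refine le_antisymm (iSup_le fun r => ?_)
        (iSup_le fun i => le_iSup (EE N W hW.mono hW.map_le k m) (i + j))
      by_cases hr : r < j
      · rw [hEbot r hr]; exact bot_le
      · have hr' : r = (r - j) + j := by omega
        rw [hr']
        exact le_iSup (fun i => EE N W hW.mono hW.map_le k m (i + j)) (r - j)
    rw [hshift]
    have : (⨆ i, EE N W hW.mono hW.map_le k m (i + j)) = Submodule.map f ⊤ := by
      rw [← A2, Submodule.map_iSup]
      exact iSup_congr hEr
    rw [this, Submodule.map_top]
    exact LinearMap.range_eq_top.2 hfsurj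

end Main2

/-- Lefschetz-type decomposition: for every `m`,
`Gr^W_m = ⊕_{ℓ≥0} ⊕_{0≤r≤ℓ, k+ℓ−2r=m} N^r(P_{k+ℓ})`. -/
theorem stmt8 [CharZero F] [FiniteDimensional F V]
    (N : V →ₗ[F] V) (hN : IsNilpotent N) (k : ℤ) (W : ℤ → Submodule F V)
    (hW : IsWeightFiltration N k W) (m : ℤ) :
    DirectSum.IsInternal
      (fun i : {x : ℕ × ℕ // x.2 ≤ x.1 ∧ (k : ℤ) + x.1 - 2 * x.2 = m} =>
        Submodule.map
          (grMap N W hW.mono hW.map_le i.1.2 (k + i.1.1) m (le_of_eq i.2.2))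
          (prim N W k hW.mono hW.map_le i.1.1)) := by
  obtain ⟨b, hb⟩ := hW.eventually_top
  have key : iSupIndep (EE N W hW.mono hW.map_le k m)
      ∧ (⨆ r, EE N W hW.mono hW.map_le k m r) = ⊤ := by
    rcases le_or_gt k m with h | h
    · exact main_ge hW b hb (b + 1 - m).toNat m h (by omega)
    · exact main_lt hW b hb m h
  obtain ⟨hindep, hsup⟩ := key
  have hfam : ∀ i : {x : ℕ × ℕ // x.2 ≤ x.1 ∧ (k : ℤ) + x.1 - 2 * x.2 = m},
      Submodule.map (grMap N W hW.mono hW.map_le i.1.2 (k + i.1.1) m (le_of_eq i.2.2))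
        (prim N W k hW.mono hW.map_le i.1.1) = EE N W hW.mono hW.map_le k m i.1.2 :=
    fun i => piece_eq_EE N W hW.mono hW.map_le k m i.1.1 i.1.2 i.2.2 i.2.1 _
  apply DirectSum.isInternal_submodule_of_iSupIndep_of_iSup_eq_top
  · have heq : (fun i : {x : ℕ × ℕ // x.2 ≤ x.1 ∧ (k : ℤ) + x.1 - 2 * x.2 = m} =>
        Submodule.map (grMap N W hW.mono hW.map_le i.1.2 (k + i.1.1) m (le_of_eq i.2.2))
          (prim N W k hW.mono hW.map_le i.1.1))
        = (EE N W hW.mono hW.map_le k m) ∘ (fun i => i.1.2) := funext hfam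
    rw [heq]
    refine hindep.comp ?_
    rintro ⟨⟨ℓ₁, r₁⟩, h₁⟩ ⟨⟨ℓ₂, r₂⟩, h₂⟩ hh
    simp only at hh
    have e₁ := h₁.2
    have e₂ := h₂.2
    simp only at e₁ e₂
    subst hh
    have : ℓ₁ = ℓ₂ := by omega
    subst this
    rfl
  · refine le_antisymm le_top ?_
    rw [← hsup]
    refine iSup_le fun r => ?_
    by_cases hc : (k : ℤ) - m ≤ r
    · set ℓ : ℕ := (m - k + 2 * r).toNat with hℓdef
      have h1 : (k : ℤ) + ℓ - 2 * r = m := by rw [hℓdef]; omega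
      have h2 : r ≤ ℓ := by rw [hℓdef]; omega
      rw [← piece_eq_EE N W hW.mono hW.map_le k m ℓ r h1 h2 (le_of_eq h1)]
      exact le_iSup (fun i : {x : ℕ × ℕ // x.2 ≤ x.1 ∧ (k : ℤ) + x.1 - 2 * x.2 = m} =>
        Submodule.map (grMap N W hW.mono hW.map_le i.1.2 (k + i.1.1) m (le_of_eq i.2.2))
          (prim N W k hW.mono hW.map_le i.1.1)) ⟨(ℓ, r), h2, h1⟩
    · rw [EE_bot N W hW.mono hW.map_le k m r hc]; exact bot_le
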